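/- (Proposition 4 key step) Let P ∈ ℂ^{N_t×N_t} be Hermitian positive semidefinite with eigendecomposition P = U Λ U^H, Λ = diag(λ₁ ≥ … ≥ λ_{N_t}), and let ρ, σ² > 0, M_p ≤ N_t. Over all S ∈ ℂ^{N_t×M_p} with S^H S = ρ I_{M_p}, the quantity tr( (S^H P S + σ² I_{M_p})^{-1} S^H P² S ) is maximized by S = √ρ · [u₁,…,u_{M_p}] (the M_p dominant eigenvectors), and the maximum value is Σ_{i=1}^{M_p} ρλ_i²/(ρλ_i + σ²). -/

import Mathlib

set_option maxHeartbeats 1000000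
open Matrix ComplexOrder

lemma sum_castLE_eq {Nt Mp : ℕ} (hMp : Mp ≤ Nt) (f : Fin Nt → ℝ) :
    ∑ i : Fin Mp, f (Fin.castLE hMp i)
      = ∑ i : Fin Nt, if (i : ℕ) < Mp then f i else 0 := by
  rw [Finset.sum_ite, Finset.sum_const_zero, add_zero]
  refine Finset.sum_bij' (fun i _ => Fin.castLE hMp i) (fun j hj => ⟨(j : ℕ), by
      simpa using (Finset.mem_filter.mp hj).2⟩) ?_ ?_ ?_ ?_ ?_
  · intro i _
    simp [i.2]
  · intro j hj
    simp
  · intro i _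
    rfl
  · intro j hj
    ext
    rfl
  · intro i _
    rfl

lemma real_maj {Nt Mp : ℕ} (hMp : Mp ≤ Nt) (μ w : Fin Nt → ℝ)
    (hμ0 : ∀ i, 0 ≤ μ i) (hdec : ∀ i j : Fin Nt, i ≤ j → μ j ≤ μ i)
    (hw0 : ∀ i, 0 ≤ w i) (hw1 : ∀ i, w i ≤ 1) (hws : ∑ i, w i = (Mp : ℝ)) :
    ∑ i, μ i * w i ≤ ∑ i : Fin Mp, μ (Fin.castLE hMp i) := by
  rw [sum_castLE_eq hMp]
  rcases eq_or_lt_of_le hMp with h | h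
  · subst h
    refine Finset.sum_le_sum fun i _ => ?_
    rw [if_pos i.2]
    calc μ i * w i ≤ μ i * 1 := by
          exact mul_le_mul_of_nonneg_left (hw1 i) (hμ0 i)
      _ = μ i := mul_one _
  · -- Mp < Nt
    set c := μ ⟨Mp, h⟩ with hc
    have key : ∀ i : Fin Nt, (μ i - c) * w i ≤ (if (i : ℕ) < Mp then μ i - c else 0) := by
      intro i
      by_cases hi : (i : ℕ) < Mp
      · rw [if_pos hi]
        have hci : c ≤ μ i := hdec i ⟨Mp, h⟩ (by exact Fin.le_def.mpr (le_of_lt hi))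
        nlinarith [hw1 i, hw0 i]
      · rw [if_neg hi]
        have hci : μ i ≤ c := hdec ⟨Mp, h⟩ i (by exact Fin.le_def.mpr (not_lt.mp hi))
        nlinarith [hw0 i]
    have h1 : ∑ i, (μ i - c) * w i ≤ ∑ i : Fin Nt, (if (i : ℕ) < Mp then μ i - c else 0) :=
      Finset.sum_le_sum fun i _ => key i
    have h2 : ∑ i : Fin Nt, (if (i : ℕ) < Mp then μ i - c else 0)
        = (∑ i : Fin Nt, if (i : ℕ) < Mp then μ i else 0) - c * Mp := by
      have : ∑ i : Fin Nt, (if (i : ℕ) < Mp then μ i - c else 0)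
          = ∑ i : Fin Nt, ((if (i : ℕ) < Mp then μ i else 0) - (if (i : ℕ) < Mp then c else 0)) := by
        refine Finset.sum_congr rfl fun i _ => ?_
        by_cases hi : (i : ℕ) < Mp <;> simp [hi]
      rw [this, Finset.sum_sub_distrib]
      congr 1
      have := sum_castLE_eq hMp (fun _ => c)
      rw [← this, Finset.sum_const, Finset.card_univ, Fintype.card_fin]
      ring
    have h3 : ∑ i, (μ i - c) * w i = ∑ i, μ i * w i - c * Mp := by
      have : ∀ i : Fin Nt, (μ i - c) * w i = μ i * w i - c * w i := fun i => by ring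
      simp_rw [this, Finset.sum_sub_distrib, ← Finset.mul_sum, hws]
    linarith [h1, h2 ▸ h1]

lemma psd_diag_nonneg {n : ℕ} {M : Matrix (Fin n) (Fin n) ℂ} (h : M.PosSemidef) (i : Fin n) :
    0 ≤ M i i := by
  have := h.dotProduct_mulVec_nonneg (Pi.single i 1)
  simpa [dotProduct, Matrix.mulVec, Pi.single_apply, Finset.sum_ite_eq,
    Finset.mul_sum, mul_comm] using this

lemma mul_submatrix_col {n m k : ℕ} (A : Matrix (Fin n) (Fin m) ℂ) (B : Matrix (Fin m) (Fin m) ℂ)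
    (c : Fin k → Fin m) : A * B.submatrix id c = (A * B).submatrix id c := by
  ext i j; simp [Matrix.mul_apply]

lemma submatrix_row_mul {n m k : ℕ} (A : Matrix (Fin m) (Fin m) ℂ) (B : Matrix (Fin m) (Fin n) ℂ)
    (c : Fin k → Fin m) : A.submatrix c id * B = (A * B).submatrix c id := by
  ext i j; simp [Matrix.mul_apply]

lemma submatrix_mul_submatrix {n k : ℕ} (A : Matrix (Fin n) (Fin n) ℂ) (B : Matrix (Fin n) (Fin n) ℂ)
    (c : Fin k → Fin n) : A.submatrix c id * B.submatrix id c = (A * B).submatrix c c := by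
  ext i j; simp [Matrix.mul_apply]

lemma uDu_mul {n : ℕ} {U : Matrix (Fin n) (Fin n) ℂ} (hU1 : Uᴴ * U = 1)
    (f g : Fin n → ℂ) :
    (U * Matrix.diagonal f * Uᴴ) * (U * Matrix.diagonal g * Uᴴ)
      = U * Matrix.diagonal (fun i => f i * g i) * Uᴴ := by
  have h1 : (U * Matrix.diagonal f * Uᴴ) * (U * Matrix.diagonal g * Uᴴ)
      = U * (Matrix.diagonal f * ((Uᴴ * U) * (Matrix.diagonal g * Uᴴ))) := by
    simp only [Matrix.mul_assoc]
  rw [h1, hU1, Matrix.one_mul, Matrix.mul_assoc, ← Matrix.mul_assoc (Matrix.diagonal f),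
    Matrix.diagonal_mul_diagonal]

lemma uDu_conjTranspose {n : ℕ} (U : Matrix (Fin n) (Fin n) ℂ) (f : Fin n → ℝ) :
    (U * Matrix.diagonal (fun i => (f i : ℂ)) * Uᴴ)ᴴ
      = U * Matrix.diagonal (fun i => (f i : ℂ)) * Uᴴ := by
  simp only [Matrix.conjTranspose_mul, Matrix.conjTranspose_conjTranspose,
    Matrix.diagonal_conjTranspose]
  simp only [Matrix.mul_assoc]
  have : (star fun i => ((f i : ℂ))) = fun i => ((f i : ℂ)) := by
    ext i; simp [Complex.conj_ofReal]
  rw [this]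

lemma uDu_mul_real {n : ℕ} {U : Matrix (Fin n) (Fin n) ℂ} (hU1 : Uᴴ * U = 1)
    (f g : Fin n → ℝ) :
    (U * Matrix.diagonal (fun i => (f i : ℂ)) * Uᴴ) *
        (U * Matrix.diagonal (fun i => (g i : ℂ)) * Uᴴ)
      = U * Matrix.diagonal (fun i => ((f i * g i : ℝ) : ℂ)) * Uᴴ := by
  rw [uDu_mul hU1]
  have : (fun i => (f i : ℂ) * (g i : ℂ)) = fun i => ((f i * g i : ℝ) : ℂ) := by
    ext i; push_cast; ring
  rw [this]

lemma diagonal_submatrix_castLE {n k : ℕ} (h : k ≤ n) (d : Fin n → ℂ) :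
    (Matrix.diagonal d).submatrix (Fin.castLE h) (Fin.castLE h)
      = Matrix.diagonal (fun i => d (Fin.castLE h i)) := by
  ext i j
  by_cases hij : i = j
  · subst hij; simp
  · simp [Matrix.diagonal_apply, hij, Fin.castLE_inj]

theorem stmt11 {Nt Mp : ℕ} (hMp : Mp ≤ Nt)
    (P : Matrix (Fin Nt) (Fin Nt) ℂ) (hP : P.PosSemidef)
    (U : Matrix (Fin Nt) (Fin Nt) ℂ) (hU : Uᴴ * U = 1 ∧ U * Uᴴ = 1)
    (lam : Fin Nt → ℝ) (hlam : ∀ i, 0 ≤ lam i)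
    (hdec : ∀ i j : Fin Nt, i ≤ j → lam j ≤ lam i)
    (hPU : P = U * Matrix.diagonal (fun i => (lam i : ℂ)) * Uᴴ)
    (ρ σ2 : ℝ) (hρ : 0 < ρ) (hσ : 0 < σ2) :
    (∀ S : Matrix (Fin Nt) (Fin Mp) ℂ, Sᴴ * S = (ρ : ℂ) • 1 →
        (Matrix.trace ((Sᴴ * P * S + (σ2 : ℂ) • 1)⁻¹ * (Sᴴ * P ^ 2 * S))).re ≤
          ∑ i : Fin Mp, ρ * (lam (Fin.castLE hMp i)) ^ 2 /
            (ρ * lam (Fin.castLE hMp i) + σ2)) ∧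
    (∀ S : Matrix (Fin Nt) (Fin Mp) ℂ,
        S = (Real.sqrt ρ : ℂ) • U.submatrix id (Fin.castLE hMp) →
        (Matrix.trace ((Sᴴ * P * S + (σ2 : ℂ) • 1)⁻¹ * (Sᴴ * P ^ 2 * S))).re =
          ∑ i : Fin Mp, ρ * (lam (Fin.castLE hMp i)) ^ 2 /
            (ρ * lam (Fin.castLE hMp i) + σ2)) := by
  obtain ⟨hU1, hU2⟩ := hU
  set s : ℝ := σ2 / ρ with hs
  have hspos : 0 < s := div_pos hσ hρ
  have hsρ : s * ρ = σ2 := div_mul_cancel₀ σ2 hρ.ne'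
  have hls : ∀ i, 0 < lam i + s := fun i => add_pos_of_nonneg_of_pos (hlam i) hspos
  have hρl : ∀ i, 0 < ρ * lam i + σ2 := fun i => by nlinarith [hlam i]
  have hP2 : P ^ 2 = U * Matrix.diagonal (fun i => ((lam i ^ 2 : ℝ) : ℂ)) * Uᴴ := by
    rw [pow_two, hPU, uDu_mul_real hU1]
    have : (fun i => ((lam i * lam i : ℝ) : ℂ)) = fun i => ((lam i ^ 2 : ℝ) : ℂ) := by
      ext i; push_cast; ring
    rw [this]
  -- the common value of the per-eigenvalue objective
  have hμρ : ∀ i : Fin Nt, lam i ^ 2 * (lam i + s)⁻¹ = ρ * lam i ^ 2 / (ρ * lam i + σ2) := by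
    intro i
    rw [hs] at *
    field_simp
  constructor
  · -- Part 1: upper bound
    intro S hS
    set μ : Fin Nt → ℝ := fun i => lam i ^ 2 * (lam i + s)⁻¹ with hμ
    set A : Matrix (Fin Mp) (Fin Mp) ℂ := Sᴴ * P * S + (σ2 : ℂ) • 1 with hA
    have hSPS : (Sᴴ * P * S).PosSemidef := hP.conjTranspose_mul_mul_same S
    have hσI : ((σ2 : ℂ) • (1 : Matrix (Fin Mp) (Fin Mp) ℂ)).PosDef := by
      rw [Matrix.smul_one_eq_diagonal]
      exact Matrix.posDef_diagonal_iff.mpr fun i => by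
        simpa using Complex.zero_lt_real.mpr hσ
    have hApd : A.PosDef := Matrix.PosDef.posSemidef_add hSPS hσI
    have hdet : IsUnit A.det := (Matrix.isUnit_iff_isUnit_det A).mp hApd.isUnit
    have hAinv : A⁻¹ * A = 1 := Matrix.nonsing_inv_mul A hdet
    have hAinv' : A * A⁻¹ = 1 := Matrix.mul_nonsing_inv A hdet
    -- matrices R, R'
    set R : Matrix (Fin Nt) (Fin Nt) ℂ :=
      U * Matrix.diagonal (fun i => ((Real.sqrt (lam i + s) : ℝ) : ℂ)) * Uᴴ with hR
    set R' : Matrix (Fin Nt) (Fin Nt) ℂ :=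
      U * Matrix.diagonal (fun i => (((Real.sqrt (lam i + s))⁻¹ : ℝ) : ℂ)) * Uᴴ with hR'
    have hsqrt_pos : ∀ i, 0 < Real.sqrt (lam i + s) := fun i => Real.sqrt_pos.mpr (hls i)
    have hRR : R * R = U * Matrix.diagonal (fun i => ((lam i + s : ℝ) : ℂ)) * Uᴴ := by
      rw [hR, uDu_mul_real hU1]
      have : (fun i => ((Real.sqrt (lam i + s) * Real.sqrt (lam i + s) : ℝ) : ℂ))
          = fun i => ((lam i + s : ℝ) : ℂ) := by
        ext i; rw [Real.mul_self_sqrt (hls i).le]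
      rw [this]
    have hR'R : R' * R = 1 := by
      rw [hR', hR, uDu_mul_real hU1]
      have : (fun i => (((Real.sqrt (lam i + s))⁻¹ * Real.sqrt (lam i + s) : ℝ) : ℂ))
          = fun _ => (1 : ℂ) := by
        ext i; rw [inv_mul_cancel₀ (hsqrt_pos i).ne']; norm_num
      rw [this, Matrix.diagonal_one, Matrix.mul_one, hU2]
    have hRH : Rᴴ = R := uDu_conjTranspose U _
    have hR'H : R'ᴴ = R' := uDu_conjTranspose U _
    -- M := R' * P^2 * R'
    set M : Matrix (Fin Nt) (Fin Nt) ℂ :=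
      U * Matrix.diagonal (fun i => ((μ i : ℝ) : ℂ)) * Uᴴ with hMdef
    have hMeq : R' * P ^ 2 * R' = M := by
      rw [hR', hP2, uDu_mul_real hU1, uDu_mul_real hU1, hMdef]
      have hfun : (fun i => (((Real.sqrt (lam i + s))⁻¹ * lam i ^ 2 * (Real.sqrt (lam i + s))⁻¹ : ℝ) : ℂ))
          = fun i => ((μ i : ℝ) : ℂ) := by
        ext i
        congr 1
        have h1 : (Real.sqrt (lam i + s))⁻¹ * (Real.sqrt (lam i + s))⁻¹ = (lam i + s)⁻¹ := by
          rw [← mul_inv, Real.mul_self_sqrt (hls i).le]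
        calc (Real.sqrt (lam i + s))⁻¹ * lam i ^ 2 * (Real.sqrt (lam i + s))⁻¹
            = lam i ^ 2 * ((Real.sqrt (lam i + s))⁻¹ * (Real.sqrt (lam i + s))⁻¹) := by ring
          _ = lam i ^ 2 * (lam i + s)⁻¹ := by rw [h1]
      rw [hfun]
    -- T and the key identities
    set T : Matrix (Fin Nt) (Fin Mp) ℂ := R * S with hT
    have hST : S = R' * T := by rw [hT, ← Matrix.mul_assoc, hR'R, Matrix.one_mul]
    have hQS : Sᴴ * (U * Matrix.diagonal (fun i => ((lam i + s : ℝ) : ℂ)) * Uᴴ) * S = A := by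
      have hQ : U * Matrix.diagonal (fun i => ((lam i + s : ℝ) : ℂ)) * Uᴴ
          = P + (s : ℂ) • 1 := by
        rw [hPU]
        have h1 : (s : ℂ) • (1 : Matrix (Fin Nt) (Fin Nt) ℂ)
            = U * ((s : ℂ) • 1) * Uᴴ := by
          rw [Matrix.mul_smul, Matrix.smul_mul, Matrix.mul_one, hU2]
        rw [h1, Matrix.smul_one_eq_diagonal, ← Matrix.add_mul, ← Matrix.mul_add,
          Matrix.diagonal_add]
        congr 2
        ext i
        push_cast
        ring
      rw [hQ, Matrix.mul_add, Matrix.add_mul, hA]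
      congr 1
      rw [Matrix.mul_smul, Matrix.mul_one, Matrix.smul_mul, hS, smul_smul]
      congr 1
      push_cast
      rw [← Complex.ofReal_mul, hsρ]
    have hTT : Tᴴ * T = A := by
      rw [hT, Matrix.conjTranspose_mul, hRH, Matrix.mul_assoc, ← Matrix.mul_assoc R R S,
        hRR]
      simp only [Matrix.mul_assoc] at hQS ⊢
      exact hQS
    have hSPPS : Sᴴ * P ^ 2 * S = Tᴴ * M * T := by
      rw [hST, Matrix.conjTranspose_mul, hR'H, ← hMeq]
      simp only [Matrix.mul_assoc]
    -- projection Π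
    set Pi : Matrix (Fin Nt) (Fin Nt) ℂ := T * A⁻¹ * Tᴴ with hPi
    have hAinvH : (A⁻¹)ᴴ = A⁻¹ := hApd.isHermitian.inv.eq
    have hPiH : Piᴴ = Pi := by
      rw [hPi]
      simp only [Matrix.conjTranspose_mul, Matrix.conjTranspose_conjTranspose, hAinvH]
      simp only [Matrix.mul_assoc]
    have hPipsd : Pi.PosSemidef := hApd.inv.posSemidef.mul_mul_conjTranspose_same T
    have hPiidem : Pi * Pi = Pi := by
      rw [hPi]
      have : T * A⁻¹ * Tᴴ * (T * A⁻¹ * Tᴴ) = T * A⁻¹ * (Tᴴ * T) * A⁻¹ * Tᴴ := by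
        simp only [Matrix.mul_assoc]
      rw [this, hTT]
      have h2 : T * A⁻¹ * A * A⁻¹ * Tᴴ = T * (A⁻¹ * A) * A⁻¹ * Tᴴ := by
        simp only [Matrix.mul_assoc]
      rw [h2, hAinv, Matrix.mul_one]
    have h1Pi : (1 - Pi).PosSemidef := by
      have h1 : (1 - Pi)ᴴ = 1 - Pi := by
        rw [Matrix.conjTranspose_sub, hPiH, Matrix.conjTranspose_one]
      have h2 : (1 - Pi)ᴴ * (1 - Pi) = 1 - Pi := by
        rw [h1, Matrix.sub_mul, Matrix.mul_sub, Matrix.mul_sub, hPiidem]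
        simp only [Matrix.mul_one, Matrix.one_mul]
        abel
      have := Matrix.posSemidef_conjTranspose_mul_self (1 - Pi)
      rwa [h2] at this
    have htrPi : Pi.trace = (Mp : ℂ) := by
      rw [hPi, Matrix.trace_mul_comm (T * A⁻¹) Tᴴ, ← Matrix.mul_assoc, hTT, hAinv',
        Matrix.trace_one]
      simp
    -- N
    set N : Matrix (Fin Nt) (Fin Nt) ℂ := Uᴴ * Pi * U with hN
    have hNpsd : N.PosSemidef := hPipsd.conjTranspose_mul_mul_same U
    have h1N : (1 - N).PosSemidef := by
      have := h1Pi.conjTranspose_mul_mul_same U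
      have heq : Uᴴ * (1 - Pi) * U = 1 - N := by
        rw [Matrix.mul_sub, Matrix.sub_mul, Matrix.mul_one, hU1, hN]
      rwa [heq] at this
    have htrN : N.trace = (Mp : ℂ) := by
      rw [hN, Matrix.trace_mul_comm (Uᴴ * Pi) U, ← Matrix.mul_assoc, hU2, Matrix.one_mul,
        htrPi]
    -- the objective equals ∑ μ i * w i
    set w : Fin Nt → ℝ := fun i => (N i i).re with hw
    have hobj : (Matrix.trace (A⁻¹ * (Sᴴ * P ^ 2 * S))).re = ∑ i, μ i * w i := by
      rw [hSPPS]
      have h1 : A⁻¹ * (Tᴴ * M * T) = A⁻¹ * Tᴴ * M * T := by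
        simp only [Matrix.mul_assoc]
      rw [h1, Matrix.trace_mul_comm (A⁻¹ * Tᴴ * M) T]
      have h2 : T * (A⁻¹ * Tᴴ * M) = Pi * M := by
        rw [hPi]; simp only [Matrix.mul_assoc]
      rw [h2, hMdef]
      have h3 : Pi * (U * Matrix.diagonal (fun i => ((μ i : ℝ) : ℂ)) * Uᴴ)
          = Pi * U * Matrix.diagonal (fun i => ((μ i : ℝ) : ℂ)) * Uᴴ := by
        simp only [Matrix.mul_assoc]
      rw [h3, Matrix.trace_mul_comm _ Uᴴ]
      have h4 : Uᴴ * (Pi * U * Matrix.diagonal (fun i => ((μ i : ℝ) : ℂ)))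
          = N * Matrix.diagonal (fun i => ((μ i : ℝ) : ℂ)) := by
        rw [hN]; simp only [Matrix.mul_assoc]
      rw [h4]
      rw [Matrix.trace]
      simp only [Matrix.diag_apply, Matrix.mul_diagonal]
      rw [Complex.re_sum]
      refine Finset.sum_congr rfl fun i _ => ?_
      rw [hw]
      simp [Complex.mul_re, Complex.ofReal_re, Complex.ofReal_im]
      ring
    have hw0 : ∀ i, 0 ≤ w i := by
      intro i
      have := psd_diag_nonneg hNpsd i
      exact (Complex.nonneg_iff.mp this).1
    have hw1 : ∀ i, w i ≤ 1 := by
      intro i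
      have h0 := psd_diag_nonneg h1N i
      have h2 : ((1 : Matrix (Fin Nt) (Fin Nt) ℂ) - N) i i = 1 - N i i := by
        simp [Matrix.sub_apply, Matrix.one_apply]
      rw [h2] at h0
      have h3 := (Complex.nonneg_iff.mp h0).1
      simp only [Complex.sub_re, Complex.one_re] at h3
      rw [hw]
      linarith
    have hws : ∑ i, w i = (Mp : ℝ) := by
      have h1 : (N.trace).re = (Mp : ℝ) := by rw [htrN]; simp
      rw [Matrix.trace, Complex.re_sum] at h1
      rw [hw]
      simpa using h1
    have hμ0 : ∀ i, 0 ≤ μ i := fun i =>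
      mul_nonneg (sq_nonneg _) (inv_nonneg.mpr (hls i).le)
    have hμdec : ∀ i j : Fin Nt, i ≤ j → μ j ≤ μ i := by
      intro i j hij
      have hlij := hdec i j hij
      rw [hμ]
      simp only
      rw [← div_eq_mul_inv, ← div_eq_mul_inv, div_le_div_iff₀ (hls j) (hls i)]
      nlinarith [mul_nonneg (mul_nonneg (hlam i) (hlam j)) (sub_nonneg.mpr hlij),
        mul_nonneg (mul_nonneg hspos.le (sub_nonneg.mpr hlij)) (add_nonneg (hlam i) (hlam j))]
    rw [hobj]
    refine le_trans (real_maj hMp μ w hμ0 hμdec hw0 hw1 hws) ?_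
    exact le_of_eq (Finset.sum_congr rfl fun i _ => hμρ _)
  · -- Part 2: the maximizer achieves the bound
    rintro S rfl
    have hcomp : ∀ f : Fin Nt → ℝ,
        ((Real.sqrt ρ : ℂ) • U.submatrix id (Fin.castLE hMp))ᴴ *
            (U * Matrix.diagonal (fun i => (f i : ℂ)) * Uᴴ) *
            ((Real.sqrt ρ : ℂ) • U.submatrix id (Fin.castLE hMp))
          = (ρ : ℂ) • Matrix.diagonal (fun j => (f (Fin.castLE hMp j) : ℂ)) := by
      intro f
      rw [Matrix.conjTranspose_smul, Matrix.conjTranspose_submatrix,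
        Matrix.smul_mul, Matrix.smul_mul, Matrix.mul_smul, smul_smul]
      have hsc : star ((Real.sqrt ρ : ℝ) : ℂ) * ((Real.sqrt ρ : ℝ) : ℂ) = (ρ : ℂ) := by
        rw [RCLike.star_def, Complex.conj_ofReal, ← Complex.ofReal_mul,
          Real.mul_self_sqrt hρ.le]
      rw [hsc]
      congr 1
      rw [submatrix_row_mul, submatrix_mul_submatrix]
      have hmid : Uᴴ * (U * Matrix.diagonal (fun i => (f i : ℂ)) * Uᴴ) * U
          = Matrix.diagonal (fun i => (f i : ℂ)) := by
        have h1 : Uᴴ * (U * Matrix.diagonal (fun i => (f i : ℂ)) * Uᴴ) * U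
            = (Uᴴ * U) * Matrix.diagonal (fun i => (f i : ℂ)) * (Uᴴ * U) := by
          simp only [Matrix.mul_assoc]
        rw [h1, hU1, Matrix.one_mul, Matrix.mul_one]
      rw [hmid, diagonal_submatrix_castLE]
    have e1 : ((Real.sqrt ρ : ℂ) • U.submatrix id (Fin.castLE hMp))ᴴ * P *
          ((Real.sqrt ρ : ℂ) • U.submatrix id (Fin.castLE hMp))
        = (ρ : ℂ) • Matrix.diagonal (fun j => ((lam (Fin.castLE hMp j) : ℝ) : ℂ)) := by
      rw [hPU]; exact hcomp _
    have e2 : ((Real.sqrt ρ : ℂ) • U.submatrix id (Fin.castLE hMp))ᴴ * P ^ 2 *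
          ((Real.sqrt ρ : ℂ) • U.submatrix id (Fin.castLE hMp))
        = (ρ : ℂ) • Matrix.diagonal (fun j => ((lam (Fin.castLE hMp j) ^ 2 : ℝ) : ℂ)) := by
      rw [hP2]; exact hcomp _
    rw [e1, e2]
    have eA : (ρ : ℂ) • Matrix.diagonal (fun j => ((lam (Fin.castLE hMp j) : ℝ) : ℂ))
          + (σ2 : ℂ) • (1 : Matrix (Fin Mp) (Fin Mp) ℂ)
        = Matrix.diagonal (fun j => ((ρ * lam (Fin.castLE hMp j) + σ2 : ℝ) : ℂ)) := by
      rw [Matrix.smul_one_eq_diagonal]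
      rw [← Matrix.diagonal_smul, Matrix.diagonal_add]
      congr 1
      ext j
      simp only [Pi.add_apply, Pi.smul_apply, smul_eq_mul]
      push_cast
      ring
    have hinv : (Matrix.diagonal (fun j => ((ρ * lam (Fin.castLE hMp j) + σ2 : ℝ) : ℂ)))⁻¹
        = Matrix.diagonal (fun j => (((ρ * lam (Fin.castLE hMp j) + σ2 : ℝ) : ℂ))⁻¹) := by
      apply Matrix.inv_eq_right_inv
      rw [Matrix.diagonal_mul_diagonal]
      have : (fun j => ((ρ * lam (Fin.castLE hMp j) + σ2 : ℝ) : ℂ) *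
            (((ρ * lam (Fin.castLE hMp j) + σ2 : ℝ) : ℂ))⁻¹) = fun _ => (1 : ℂ) := by
        ext j
        exact mul_inv_cancel₀ (Complex.ofReal_ne_zero.mpr (hρl _).ne')
      rw [this, Matrix.diagonal_one]
    rw [eA, hinv]
    rw [Matrix.mul_smul, Matrix.diagonal_mul_diagonal, Matrix.trace_smul, Matrix.trace_diagonal]
    rw [smul_eq_mul, Finset.mul_sum, Complex.re_sum]
    refine Finset.sum_congr rfl fun j _ => ?_
    rw [← Complex.ofReal_inv, ← Complex.ofReal_mul, ← Complex.ofReal_mul, Complex.ofReal_re,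
      div_eq_mul_inv]
    ring
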